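/- arXiv:1907.06771 — 2 statements merged into one kernel-verified Lean document; each statement's English description precedes it below -/
import Mathlib

section
/- Let φ : ℝ → ℝ and suppose ID*_φ := lim_{θ→0} θ·φ'(θ)/φ(θ) exists. Let t, w be such that t/w > 0 and φ(t)/φ(w) > 0, and suppose φ is non-zero and continuously differentiable everywhere on the closed interval [min{t,w}, max{t,w}]. Then φ(t)/φ(w) = (t/w)^{ID*_φ} · exp(∫_t^w (ID*_φ − θφ'(θ)/φ(θ))/θ dθ). -/
open Filter Topology

theorem stmt4 (φ : ℝ → ℝ) (d : ℝ)
    (hd : Filter.Tendsto (fun θ : ℝ => θ * deriv φ θ / φ θ) (𝓝[≠] (0 : ℝ)) (𝓝 d))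
    (t w : ℝ) (htw : 0 < t / w) (hφtw : 0 < φ t / φ w)
    (hφ : ∀ θ ∈ Set.uIcc t w, φ θ ≠ 0)
    (hC1 : ContDiffOn ℝ 1 φ (Set.uIcc t w)) :
    φ t / φ w = (t / w) ^ d *
      Real.exp (∫ θ in t..w, (d - θ * deriv φ θ / φ θ) / θ) := by
  have hφt : φ t ≠ 0 := hφ t Set.left_mem_uIcc
  have hφw : φ w ≠ 0 := hφ w Set.right_mem_uIcc
  rcases eq_or_ne t w with rfl | htne
  · have ht0 : t ≠ 0 := by
      intro h; rw [h] at htw; simp at htw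
    simp [div_self ht0, div_self hφt]
  -- 0 is not in the interval
  have h0 : ∀ θ ∈ Set.uIcc t w, θ ≠ 0 := by
    rcases div_pos_iff.mp htw with ⟨ht, hw⟩ | ⟨ht, hw⟩ <;>
      · intro θ hθ
        rcases Set.mem_uIcc.mp hθ with ⟨h1, h2⟩ | ⟨h1, h2⟩
        · first | exact ne_of_gt (by linarith) | exact ne_of_lt (by linarith)
        · first | exact ne_of_gt (by linarith) | exact ne_of_lt (by linarith)
  have h0' : (0 : ℝ) ∉ Set.uIcc t w := fun h => h0 0 h rfl
  have hmm : min t w < max t w := min_lt_max.mpr htne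
  have hsIcc : Set.uIcc t w = Set.Icc (min t w) (max t w) := rfl
  have hud : UniqueDiffOn ℝ (Set.uIcc t w) := by
    rw [hsIcc]; exact uniqueDiffOn_Icc hmm
  set g : ℝ → ℝ := derivWithin φ (Set.uIcc t w) with hg
  have hgc : ContinuousOn g (Set.uIcc t w) := hC1.continuousOn_derivWithin hud le_rfl
  have hφc : ContinuousOn φ (Set.uIcc t w) := hC1.continuousOn
  have hIoo : ∀ θ ∈ Set.Ioo (min t w) (max t w), Set.uIcc t w ∈ 𝓝 θ := by
    intro θ hθ; rw [hsIcc]; exact Icc_mem_nhds hθ.1 hθ.2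
  have hsub : Set.Ioo (min t w) (max t w) ⊆ Set.uIcc t w := by
    rw [hsIcc]; exact Set.Ioo_subset_Icc_self
  have hder : ∀ θ ∈ Set.Ioo (min t w) (max t w), HasDerivAt φ (g θ) θ := by
    intro θ hθ
    have hd1 : DifferentiableAt ℝ φ θ :=
      ((hC1.differentiableOn one_ne_zero) θ (hsub hθ)).differentiableAt (hIoo θ hθ)
    have hge : g θ = deriv φ θ := derivWithin_of_mem_nhds (hIoo θ hθ)
    rw [hge]; exact hd1.hasDerivAt
  have hgd : ∀ θ ∈ Set.Ioo (min t w) (max t w), deriv φ θ = g θ := fun θ hθ =>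
    (derivWithin_of_mem_nhds (hIoo θ hθ)).symm
  -- FTC for log ∘ φ
  have hlogc : ContinuousOn (fun x => Real.log (φ x)) (Set.uIcc t w) := hφc.log hφ
  have hint1 : IntervalIntegrable (fun θ => g θ / φ θ) MeasureTheory.volume t w :=
    (hgc.div hφc hφ).intervalIntegrable
  have hftc : ∫ θ in t..w, g θ / φ θ = Real.log (φ w) - Real.log (φ t) := by
    apply intervalIntegral.integral_eq_sub_of_hasDeriv_right hlogc ?_ hint1
    intro θ hθ
    exact ((hder θ hθ).log (hφ θ (hsub hθ))).hasDerivWithinAt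
  have hint2 : IntervalIntegrable (fun θ => d * (1 / θ)) MeasureTheory.volume t w := by
    apply ContinuousOn.intervalIntegrable
    exact continuousOn_const.mul (continuousOn_const.div continuousOn_id h0)
  -- replace the integrand a.e.
  have hends : ∀ᵐ x ∂(MeasureTheory.volume : MeasureTheory.Measure ℝ),
      x ∉ ({min t w, max t w} : Set ℝ) := by
    have : (MeasureTheory.volume : MeasureTheory.Measure ℝ) ({min t w, max t w} : Set ℝ) = 0 :=
      (Set.Countable.measure_zero (by simp) _)
    exact (MeasureTheory.measure_eq_zero_iff_ae_notMem).mp this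
  have hcongr : ∫ θ in t..w, (d - θ * deriv φ θ / φ θ) / θ
      = ∫ θ in t..w, (d * (1 / θ) - g θ / φ θ) := by
    apply intervalIntegral.integral_congr_ae
    filter_upwards [hends] with x hx hmem
    have hx1 : x ≠ max t w := by simp at hx; exact hx.2
    have hx' : x ∈ Set.Ioo (min t w) (max t w) := by
      have hmem' : x ∈ Set.Ioc (min t w) (max t w) := hmem
      exact ⟨hmem'.1, lt_of_le_of_ne hmem'.2 hx1⟩
    have hx0 : x ≠ 0 := h0 x (hsub hx')
    rw [hgd x hx']
    field_simp
  have hsplit : ∫ θ in t..w, (d * (1 / θ) - g θ / φ θ)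
      = d * Real.log (w / t) - (Real.log (φ w) - Real.log (φ t)) := by
    rw [intervalIntegral.integral_sub hint2 hint1, hftc,
      intervalIntegral.integral_const_mul, integral_one_div h0']
  rw [hcongr, hsplit]
  have hL : Real.log (w / t) = -Real.log (t / w) := by
    rw [← inv_div, Real.log_inv]
  have hrw : (t / w : ℝ) ^ d = Real.exp (Real.log (t / w) * d) :=
    Real.rpow_def_of_pos htw d
  rw [hrw, hL, ← Real.exp_add]
  rw [show Real.log (t / w) * d + (d * -Real.log (t / w) - (Real.log (φ w) - Real.log (φ t)))
      = Real.log (φ t / φ w) by rw [Real.log_div hφt hφw]; ring]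
  exact (Real.exp_log hφtw).symm
end

section
/- Let F be non-zero with continuous partials on N_δ = {x ∈ ℝ^m : 0 < ‖x‖_∞ < δ}, and suppose F is a product F(x) = Π_{i=1}^m h_i(x_i) where each h_i : ℝ → (0,∞) is continuously differentiable on (−δ,δ)\{0} with lim_{t→0} t·h_i'(t)/h_i(t) = d_i. Then ID*_F := lim_{x→0, x∈N_δ, all x_i ≠ 0} xᵀ∇F(x)/F(x) exists and equals Σ_{i=1}^m d_i. -/
open Filter Topology

theorem stmt17 (m : ℕ) (hm : 0 < m) (δ : ℝ) (hδ : 0 < δ)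
    (F : (Fin m → ℝ) → ℝ)
    (hF : ∀ x : Fin m → ℝ, 0 < ‖x‖ → ‖x‖ < δ → F x ≠ 0 ∧ ContDiffAt ℝ 1 F x)
    (h : Fin m → ℝ → ℝ) (d : Fin m → ℝ)
    (hprod : ∀ x : Fin m → ℝ, F x = ∏ i, h i (x i))
    (hpos : ∀ i, ∀ t ∈ Set.Ioo (-δ) δ, t ≠ 0 → 0 < h i t)
    (hC1 : ∀ i, ∀ t ∈ Set.Ioo (-δ) δ, t ≠ 0 → ContDiffAt ℝ 1 (h i) t)
    (hd : ∀ i, Filter.Tendsto (fun t : ℝ => t * deriv (h i) t / h i t)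
      (𝓝[≠] (0 : ℝ)) (𝓝 (d i))) :
    Filter.Tendsto (fun x : Fin m → ℝ => fderiv ℝ F x x / F x)
      (𝓝[{x : Fin m → ℝ | 0 < ‖x‖ ∧ ‖x‖ < δ ∧ ∀ i, x i ≠ 0}] 0)
      (𝓝 (∑ i, d i)) := by
  set S : Set (Fin m → ℝ) := {x : Fin m → ℝ | 0 < ‖x‖ ∧ ‖x‖ < δ ∧ ∀ i, x i ≠ 0}
  -- coordinates of points in S are in Ioo (-δ) δ and nonzero
  have hcoord : ∀ x ∈ S, ∀ i, x i ∈ Set.Ioo (-δ) δ ∧ x i ≠ 0 := by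
    rintro x ⟨-, hxδ, hx0⟩ i
    have : |x i| < δ := lt_of_le_of_lt ((Real.norm_eq_abs (x i)) ▸ norm_le_pi_norm x i) hxδ
    exact ⟨abs_lt.mp this, hx0 i⟩
  -- main identity on S
  have key : ∀ x ∈ S, fderiv ℝ F x x / F x
      = ∑ i, x i * deriv (h i) (x i) / h i (x i) := by
    intro x hx
    have hFx : F x = ∏ i, h i (x i) := hprod x
    have hder : ∀ i, HasDerivAt (h i) (deriv (h i) (x i)) (x i) := by
      intro i
      obtain ⟨hio, hne⟩ := hcoord x hx i
      exact ((hC1 i (x i) hio hne).differentiableAt one_ne_zero).hasDerivAt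
    have hg : ∀ i : Fin m, HasFDerivAt (fun y : Fin m → ℝ => h i (y i))
        (deriv (h i) (x i) • (ContinuousLinearMap.proj i :
          (Fin m → ℝ) →L[ℝ] ℝ)) x := by
      intro i
      exact (hder i).comp_hasFDerivAt x
        ((ContinuousLinearMap.proj i : (Fin m → ℝ) →L[ℝ] ℝ).hasFDerivAt)
    have hprodF : HasFDerivAt F
        (∑ i, (∏ j ∈ Finset.univ.erase i, h j (x j)) •
          (deriv (h i) (x i) • (ContinuousLinearMap.proj i :
            (Fin m → ℝ) →L[ℝ] ℝ))) x := by
      have := HasFDerivAt.finset_prod (u := Finset.univ)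
        (g := fun i (y : Fin m → ℝ) => h i (y i))
        (g' := fun i => deriv (h i) (x i) • (ContinuousLinearMap.proj i :
          (Fin m → ℝ) →L[ℝ] ℝ)) (fun i _ => hg i)
      exact this.congr_of_eventuallyEq (by
        filter_upwards with y using (hprod y))
    rw [hprodF.fderiv]
    have hhne : ∀ j, h j (x j) ≠ 0 := fun j =>
      (hpos j (x j) (hcoord x hx j).1 (hcoord x hx j).2).ne'
    simp only [ContinuousLinearMap.coe_sum', Finset.sum_apply,
      ContinuousLinearMap.coe_smul', Pi.smul_apply, ContinuousLinearMap.proj_apply,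
      smul_eq_mul, hFx, Finset.sum_div]
    refine Finset.sum_congr rfl fun i _ => ?_
    have herase : (∏ j ∈ Finset.univ.erase i, h j (x j)) * h i (x i)
        = ∏ j, h j (x j) := Finset.prod_erase_mul _ _ (Finset.mem_univ i)
    have hprodne : (∏ j ∈ Finset.univ.erase i, h j (x j)) ≠ 0 :=
      Finset.prod_ne_zero_iff.mpr fun j _ => hhne j
    rw [← herase]
    rw [div_eq_div_iff (mul_ne_zero hprodne (hhne i)) (hhne i)]
    ring
  -- tendsto of the sum
  have hsum : Tendsto (fun x : Fin m → ℝ => ∑ i, x i * deriv (h i) (x i) / h i (x i))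
      (𝓝[S] 0) (𝓝 (∑ i, d i)) := by
    refine tendsto_finset_sum _ fun i _ => ?_
    refine (hd i).comp ?_
    rw [tendsto_nhdsWithin_iff]
    constructor
    · exact ((continuous_apply i).tendsto 0).mono_left nhdsWithin_le_nhds
    · filter_upwards [eventually_mem_nhdsWithin] with x hx
      exact (hcoord x hx i).2
  refine hsum.congr' ?_
  filter_upwards [eventually_mem_nhdsWithin] with x hx
  exact (key x hx).symm
end
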